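/- The map θ ↦ (θ(X), θ(Y)) is a bijection from the group Aut₍X,Y₎(F₂) = {θ ∈ Aut(F₂) | θ((X,Y)) = (X,Y)} onto the set {(g₊, g₋) ∈ F₂² | (g₋, g₊) = (Y, X)}, where (a,b) := aba⁻¹b⁻¹. -/

import Mathlib

namespace Stmt7

open scoped commutatorElement

/-- The free group on two generators `X, Y`. -/
abbrev F₂ := FreeGroup Bool

/-- The generator `X`. -/
def X : F₂ := FreeGroup.of true

/-- The generator `Y`. -/
def Y : F₂ := FreeGroup.of false

/-- The map `θ ↦ (θ(X), θ(Y))` on automorphisms fixing the commutator `⁅X,Y⁆`. -/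
def toPair (θ : {θ : F₂ ≃* F₂ // θ.1 ⁅X, Y⁆ = ⁅X, Y⁆}) : F₂ × F₂ :=
  (θ.1 X, θ.1 Y)

section Aux

open FreeGroup List

abbrev Z2 := Bool × Bool

/-- The no-cancellation relation between adjacent letters. -/
def NC (p q : Z2) : Prop := ¬(p.1 = q.1 ∧ p.2 = !q.2)

/-- A word is reduced. -/
def Rd (L : List Z2) : Prop := List.Chain' NC L

lemma rd_reduce (L : List Z2) : Rd (reduce L) := by
  induction L with
  | nil => exact List.isChain_nil
  | cons x L ih =>
    rw [FreeGroup.reduce.cons]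
    cases hrl : reduce L with
    | nil => simp [Rd]; exact List.isChain_singleton x
    | cons hd tl =>
      rw [hrl] at ih
      dsimp only
      split_ifs with h
      · exact ih.tail
      · exact List.isChain_cons_cons.2 ⟨h, ih⟩

lemma reduce_eq_self_of_rd {L : List Z2} (h : Rd L) : reduce L = L := by
  induction L with
  | nil => rfl
  | cons x xs ih =>
    have hx : reduce xs = xs := ih h.tail
    rw [FreeGroup.reduce.cons, hx]
    cases xs with
    | nil => rfl
    | cons hd tl =>
      dsimp only
      rw [if_neg (List.isChain_cons_cons.1 h).1]

lemma rd_toWord (x : FreeGroup Bool) : Rd x.toWord := by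
  rw [← FreeGroup.reduce_toWord]
  exact rd_reduce _

lemma toWord_mk_of_rd {W : List Z2} (h : Rd W) : (FreeGroup.mk W).toWord = W := by
  rw [FreeGroup.toWord_mk, reduce_eq_self_of_rd h]

lemma rd_invRev {L : List Z2} (h : Rd L) : Rd (invRev L) := by
  have := rd_reduce (invRev L)
  rwa [FreeGroup.reduce_invRev, reduce_eq_self_of_rd h] at this

lemma invRev_append' (L₁ L₂ : List Z2) : invRev (L₁ ++ L₂) = invRev L₂ ++ invRev L₁ := by
  simp [invRev]

lemma invRev_singleton (z : Z2) : invRev [z] = [(z.1, !z.2)] := by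
  simp [invRev]

lemma toWord_mul (x y : FreeGroup Bool) :
    (x * y).toWord = reduce (x.toWord ++ y.toWord) := by
  conv_lhs => rw [← FreeGroup.mk_toWord (x := x), ← FreeGroup.mk_toWord (x := y)]
  rw [FreeGroup.mul_mk, FreeGroup.toWord_mk]

/-- Cancellation decomposition for the product of two reduced words. -/
lemma mul_decomp_aux (n : ℕ) : ∀ U V : List Z2, U.length ≤ n → Rd U → Rd V →
    ∃ p d q, U = p ++ d ∧ V = invRev d ++ q ∧ reduce (U ++ V) = p ++ q := by
  induction n with
  | zero =>
    intro U V hl hU hV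
    refine ⟨U, [], V, by simp, by simp [invRev], ?_⟩
    have : U = [] := List.length_eq_zero_iff.1 (Nat.le_zero.1 hl)
    subst this
    simpa using reduce_eq_self_of_rd hV
  | succ n ih =>
    intro U V hl hU hV
    by_cases hUV : Rd (U ++ V)
    · exact ⟨U, [], V, by simp, by simp [invRev], reduce_eq_self_of_rd hUV⟩
    · have hjunc : ¬ (∀ x ∈ U.getLast?, ∀ y ∈ V.head?, NC x y) := by
        intro hj
        exact hUV (List.isChain_append.2 ⟨hU, hV, hj⟩)
      push_neg at hjunc
      obtain ⟨x, hx, y, hy, hxy⟩ := hjunc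
      have hxy' : x.1 = y.1 ∧ x.2 = !y.2 := not_not.1 hxy
      -- decompose U and V
      rcases U.eq_nil_or_concat' with rfl | ⟨U₀, x', rfl⟩
      · simp at hx
      cases V with
      | nil => simp at hy
      | cons y' V₀ =>
        have hxx : x' = x := by simpa using hx
        have hyy : y' = y := by simpa using hy
        have hc : x'.1 = y'.1 ∧ x'.2 = !y'.2 := by rw [hxx, hyy]; exact hxy'
        have hyx : y' = (x'.1, !x'.2) :=
          Prod.ext hc.1.symm (by rw [hc.2, Bool.not_not])
        have hred : reduce (U₀ ++ [x'] ++ y' :: V₀) = reduce (U₀ ++ V₀) := by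
          apply FreeGroup.reduce.Step.eq
          have he : U₀ ++ [x'] ++ y' :: V₀ = U₀ ++ (x'.1, x'.2) :: (x'.1, !x'.2) :: V₀ := by
            rw [hyx]; simp
          rw [he]
          exact FreeGroup.Red.Step.not
        have hU₀ : Rd U₀ := (List.isChain_append.1 hU).1
        have hV₀ : Rd V₀ := hV.tail
        have hlen : U₀.length ≤ n := by
          have := hl; simp at this; omega
        obtain ⟨p, d', q, e1, e2, e3⟩ := ih U₀ V₀ hlen hU₀ hV₀
        refine ⟨p, d' ++ [x'], q, ?_, ?_, ?_⟩
        · rw [e1, List.append_assoc]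
        · rw [invRev_append', invRev_singleton, ← hyx]
          simp [e2]
        · rw [hred, e3]

lemma mul_decomp {U V : List Z2} (hU : Rd U) (hV : Rd V) :
    ∃ p d q, U = p ++ d ∧ V = invRev d ++ q ∧ reduce (U ++ V) = p ++ q :=
  mul_decomp_aux U.length U V le_rfl hU hV

/-- Decomposition of products of free group elements. -/
lemma prod_decomp (x y : FreeGroup Bool) :
    ∃ p d q, x.toWord = p ++ d ∧ y.toWord = invRev d ++ q ∧ (x * y).toWord = p ++ q := by
  obtain ⟨p, d, q, e1, e2, e3⟩ := mul_decomp (rd_toWord x) (rd_toWord y)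
  exact ⟨p, d, q, e1, e2, by rw [toWord_mul, e3]⟩


lemma cWord : (X * Y * X⁻¹ * Y⁻¹).toWord
    = [(true,true),(false,true),(true,false),(false,false)] := rfl

lemma not_rd_invRev_self {r : List Z2} (hr : r ≠ []) : ¬ Rd (invRev r ++ r) := by
  intro h
  obtain ⟨z, r', rfl⟩ : ∃ z r', r = z :: r' := by
    cases r with
    | nil => exact absurd rfl hr
    | cons z r' => exact ⟨z, r', rfl⟩
  have he : invRev (z :: r') = invRev r' ++ [(z.1, !z.2)] := by simp [invRev]
  rw [he] at h
  have hinf : [(z.1, !z.2), z] <:+: invRev r' ++ [(z.1, !z.2)] ++ z :: r' := by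
    exact ⟨invRev r', r', by simp⟩
  have := h.infix hinf
  have h2 : NC (z.1, !z.2) z := (List.isChain_cons_cons.1 this).1
  exact h2 ⟨rfl, rfl⟩

lemma main_lemma (a b : F₂) (hc : a * b * a⁻¹ * b⁻¹ = X * Y * X⁻¹ * Y⁻¹)
    (h1 : a.toWord.length ≤ (a * b).toWord.length)
    (h5 : b.toWord.length ≤ (a * b).toWord.length)
    (h3 : b.toWord.length ≤ (b * a).toWord.length)
    (h6 : a.toWord.length ≤ (b * a).toWord.length)
    (h4 : b.toWord.length ≤ (b * a⁻¹).toWord.length)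
    (h2 : a.toWord.length ≤ (b * a⁻¹).toWord.length) :
    a = X ∧ b = Y := by
  -- nontriviality
  have hane : a ≠ 1 := by
    rintro rfl
    have h0 : (1 : F₂) = X * Y * X⁻¹ * Y⁻¹ := by simpa using hc
    have := congrArg FreeGroup.toWord h0
    rw [cWord, FreeGroup.toWord_one] at this
    simp at this
  have hbne : b ≠ 1 := by
    rintro rfl
    have h0 : (1 : F₂) = X * Y * X⁻¹ * Y⁻¹ := by simpa using hc
    have := congrArg FreeGroup.toWord h0
    rw [cWord, FreeGroup.toWord_one] at this
    simp at this
  have hm : 1 ≤ a.toWord.length := by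
    rcases Nat.eq_zero_or_pos a.toWord.length with h | h
    · exact absurd (FreeGroup.toWord_eq_nil_iff.1 (List.length_eq_zero_iff.1 h)) hane
    · exact h
  have hn : 1 ≤ b.toWord.length := by
    rcases Nat.eq_zero_or_pos b.toWord.length with h | h
    · exact absurd (FreeGroup.toWord_eq_nil_iff.1 (List.length_eq_zero_iff.1 h)) hbne
    · exact h
  -- junction decompositions
  obtain ⟨a₁, t, b₁, eA1, eB1, eAB⟩ := prod_decomp a b
  obtain ⟨b₂, s, a₂, eB2, eA2, eBA⟩ := prod_decomp b a
  obtain ⟨f, r, A₃, eB3, eA3, eBA'⟩ := prod_decomp b a⁻¹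
  rw [FreeGroup.toWord_inv] at eA3
  have eA3' : a.toWord = invRev A₃ ++ r := by
    have := congrArg invRev eA3
    rwa [invRev_invRev, invRev_append', invRev_invRev] at this
  -- length bookkeeping
  have lA1 : a.toWord.length = a₁.length + t.length := by rw [eA1, List.length_append]
  have lB1 : b.toWord.length = t.length + b₁.length := by
    rw [eB1, List.length_append, invRev_length]
  have lB2 : b.toWord.length = b₂.length + s.length := by rw [eB2, List.length_append]
  have lA2 : a.toWord.length = s.length + a₂.length := by
    rw [eA2, List.length_append, invRev_length]
  have lB3 : b.toWord.length = f.length + r.length := by rw [eB3, List.length_append]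
  have lA3 : a.toWord.length = A₃.length + r.length := by
    have := congrArg List.length eA3'
    simpa using this
  have lAB : (a * b).toWord.length = a₁.length + b₁.length := by
    rw [eAB, List.length_append]
  have lBA : (b * a).toWord.length = b₂.length + a₂.length := by
    rw [eBA, List.length_append]
  have lBA' : (b * a⁻¹).toWord.length = f.length + A₃.length := by
    rw [eBA', List.length_append]
  -- the six half-inequalities
  have i1 : 2 * t.length ≤ b.toWord.length := by omega
  have i2 : 2 * t.length ≤ a.toWord.length := by omega
  have i3 : 2 * s.length ≤ a.toWord.length := by omega
  have i4 : 2 * s.length ≤ b.toWord.length := by omega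
  have i5 : 2 * r.length ≤ b.toWord.length := by omega
  have i6 : 2 * r.length ≤ a.toWord.length := by omega
  -- split b₁ = b₁' ++ r
  obtain ⟨b₁', hf, hb₁⟩ : ∃ b₁', f = invRev t ++ b₁' ∧ b₁ = b₁' ++ r := by
    have he : invRev t ++ b₁ = f ++ r := by rw [← eB1, eB3]
    rcases List.append_eq_append_iff.1 he with ⟨a', h1', h2'⟩ | ⟨c', h1', h2'⟩
    · exact ⟨a', h1', h2'⟩
    · have hl1 : t.length = f.length + c'.length := by
        have := congrArg List.length h1'; simpa [invRev_length] using this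
      have hl2 : r.length = c'.length + b₁.length := by
        have := congrArg List.length h2'; simpa using this
      have hc0 : c'.length = 0 := by omega
      have : c' = [] := List.length_eq_zero_iff.1 hc0
      subst this
      refine ⟨[], by simpa using h1'.symm, by simpa using h2'.symm⟩
  -- split A₃ = g ++ s
  obtain ⟨g, hA₃, ha₂⟩ : ∃ g, A₃ = g ++ s ∧ invRev a₂ = invRev r ++ g := by
    have he : invRev r ++ A₃ = invRev a₂ ++ s := by
      rw [← eA3]
      have := congrArg invRev eA2
      rwa [invRev_append', invRev_invRev] at this
    rcases List.append_eq_append_iff.1 he with ⟨a', h1', h2'⟩ | ⟨c', h1', h2'⟩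
    · exact ⟨a', h2', h1'⟩
    · have hl1 : r.length = a₂.length + c'.length := by
        have := congrArg List.length h1'; simpa [invRev_length] using this
      have hl2 : s.length = c'.length + A₃.length := by
        have := congrArg List.length h2'; simpa using this
      have hc0 : c'.length = 0 := by omega
      have : c' = [] := List.length_eq_zero_iff.1 hc0
      subst this
      exact ⟨[], by simpa using h2'.symm, by simpa using h1'.symm⟩
  -- b₁' nonempty
  have hb₁' : b₁' ≠ [] := by
    intro h0
    subst h0
    simp only [List.nil_append] at hb₁
    have hlb₁ : b₁.length = r.length := by rw [hb₁]
    have htr : t.length = r.length := by omega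
    have htr' : t = r := by
      have he : a₁ ++ t = invRev A₃ ++ r := by rw [← eA1, eA3']
      refine (List.append_inj he ?_).2
      have h1'' := congrArg List.length he
      simp only [List.length_append, invRev_length] at h1''
      simp only [invRev_length]
      omega
    have : b.toWord = invRev r ++ r := by rw [eB1, hb₁, htr']
    have hrne : r ≠ [] := by
      intro h0
      subst h0
      have hb0 : b₁.length = 0 := by simp [hb₁]
      have ht0 : t.length = 0 := by simpa using htr
      omega
    exact not_rd_invRev_self hrne (this ▸ rd_toWord b)
  -- g nonempty
  have hg : g ≠ [] := by
    intro h0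
    subst h0
    simp only [List.nil_append] at hA₃
    have ha₂' : a₂ = r := invRev_injective (by simpa using ha₂)
    have hlA₃ : A₃.length = s.length := by rw [hA₃]
    have hsr : s.length = r.length := by omega
    have hsr' : s = r := by
      have he : b₂ ++ s = f ++ r := by rw [← eB2, eB3]
      exact (List.append_inj he (by
        have h1'' := congrArg List.length he
        simp at h1''
        omega)).2
    have : a.toWord = invRev r ++ r := by rw [eA2, ha₂', hsr']
    have hrne : r ≠ [] := by
      intro h0
      subst h0
      have ha0 : a₂.length = 0 := by simp [ha₂']
      have hs0 : s.length = 0 := by simpa using hsr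
      omega
    exact not_rd_invRev_self hrne (this ▸ rd_toWord a)
  obtain ⟨b₁'', w2, rfl⟩ := (List.eq_nil_or_concat' b₁').resolve_left hb₁'
  obtain ⟨w3, g', rfl⟩ : ∃ w3 g', g = w3 :: g' := by
    cases g with
    | nil => exact absurd rfl hg
    | cons w3 g' => exact ⟨w3, g', rfl⟩
  -- reducedness of the pieces
  have rdAB : Rd (a₁ ++ b₁) := by rw [← eAB]; exact rd_toWord (a * b)
  rw [hb₁] at rdAB
  have rdW1 : Rd (a₁ ++ (b₁'' ++ [w2])) := by
    have h' : Rd ((a₁ ++ (b₁'' ++ [w2])) ++ r) := by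
      rw [List.append_assoc]; exact rdAB
    exact h'.left_of_append
  have rdBA : Rd (b₂ ++ a₂) := by rw [← eBA]; exact rd_toWord (b * a)
  have rdBAi : Rd (invRev a₂ ++ invRev b₂) := by
    have := rd_invRev rdBA; rwa [invRev_append'] at this
  have rdW2 : Rd ((w3 :: g') ++ invRev b₂) := by
    have h' : Rd (invRev r ++ ((w3 :: g') ++ invRev b₂)) := by
      rw [← List.append_assoc, ← ha₂]
      exact rdBAi
    exact h'.right_of_append
  have rdfA : Rd (f ++ A₃) := by rw [← eBA']; exact rd_toWord (b * a⁻¹)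
  have hjunc : NC w2 w3 := by
    have hj := (List.isChain_append.1 rdfA).2.2
    apply hj
    · rw [hf]; simp
    · rw [hA₃]; simp
  have rdW : Rd ((a₁ ++ (b₁'' ++ [w2])) ++ ((w3 :: g') ++ invRev b₂)) := by
    refine List.isChain_append.2 ⟨rdW1, rdW2, ?_⟩
    intro x hx y hy
    have hx' : w2 = x := by simpa using hx
    have hy' : w3 = y := by simpa using hy
    rw [← hx', ← hy']
    exact hjunc
  -- the group element equation
  have ha₂' : a₂ = invRev (w3 :: g') ++ r := by
    have := congrArg invRev ha₂
    rwa [invRev_invRev, invRev_append', invRev_invRev] at this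
  have hab : a * b = FreeGroup.mk (a₁ ++ b₁) := by rw [← eAB, FreeGroup.mk_toWord]
  have hba : b * a = FreeGroup.mk (b₂ ++ a₂) := by rw [← eBA, FreeGroup.mk_toWord]
  have hWe : a * b * a⁻¹ * b⁻¹
      = FreeGroup.mk ((a₁ ++ (b₁'' ++ [w2])) ++ ((w3 :: g') ++ invRev b₂)) := by
    have e0 : a * b * a⁻¹ * b⁻¹ = (a * b) * (b * a)⁻¹ := by group
    rw [e0, hab, hba, hb₁, ha₂']
    simp only [← FreeGroup.mul_mk, ← FreeGroup.inv_mk]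
    group
  have hcW : ([((true : Bool),(true : Bool)),(false,true),(true,false),(false,false)] : List Z2)
      = (a₁ ++ (b₁'' ++ [w2])) ++ ((w3 :: g') ++ invRev b₂) := by
    rw [← cWord, ← hc, hWe, toWord_mk_of_rd rdW]
  -- length bookkeeping of the four pieces
  have lsum : 4 = a₁.length + (b₁''.length + (g'.length + b₂.length + 1 + 1)) := by
    have := congrArg List.length hcW
    simpa [invRev_length] using this
  have la₁ : a₁.length = 1 := by omega
  have lb₁'' : b₁''.length = 0 := by omega
  have lg' : g'.length = 0 := by omega
  have lb₂ : b₂.length = 1 := by omega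
  obtain ⟨z1, hz1⟩ := List.length_eq_one_iff.1 la₁
  have hb0 : b₁'' = [] := List.length_eq_zero_iff.1 lb₁''
  have hg0 : g' = [] := List.length_eq_zero_iff.1 lg'
  obtain ⟨z4, hz4⟩ := List.length_eq_one_iff.1 lb₂
  subst hb0 hg0 hz1 hz4
  rw [invRev_singleton] at hcW
  simp only [List.nil_append, List.append_nil, List.cons_append, List.singleton_append,
    List.cons.injEq] at hcW
  obtain ⟨e1, e2, e3, e4, -⟩ := hcW
  -- piece length equations
  have lb₁ : b₁.length = 1 + r.length := by
    have := congrArg List.length hb₁; simp at this; omega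
  have lA₃' : A₃.length = 1 + s.length := by
    have := congrArg List.length hA₃; simp at this; omega
  have ht01 : t.length = 0 ∨ t.length = 1 := by omega
  rcases ht01 with ht0 | ht1
  · -- main case : (a, b) = (X, Y)
    have hr0 : r.length = 0 := by omega
    have hs0 : s.length = 0 := by omega
    have htnil : t = [] := List.length_eq_zero_iff.1 ht0
    have hrnil : r = [] := List.length_eq_zero_iff.1 hr0
    constructor
    · have : a.toWord = [((true : Bool), (true : Bool))] := by
        rw [eA1, htnil, List.append_nil, ← e1]
      have ha : a = FreeGroup.mk [((true : Bool), (true : Bool))] := by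
        rw [← FreeGroup.mk_toWord (x := a), this]
      exact ha
    · have : b.toWord = [((false : Bool), (true : Bool))] := by
        rw [eB1, hb₁, htnil, hrnil]
        simp [invRev, ← e2]
      have hbY : b = FreeGroup.mk [((false : Bool), (true : Bool))] := by
        rw [← FreeGroup.mk_toWord (x := b), this]
      exact hbY
  · -- impossible case m = n = 2
    exfalso
    have hs1 : s.length = 1 := by omega
    have hr0 : r.length = 0 := by omega
    have hrnil : r = [] := List.length_eq_zero_iff.1 hr0
    obtain ⟨t0, ht⟩ := List.length_eq_one_iff.1 ht1
    obtain ⟨s0, hs⟩ := List.length_eq_one_iff.1 hs1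
    -- a.toWord two ways
    have EA1 : a.toWord = [z1, t0] := by rw [eA1, ht]; rfl
    have EA2 : a.toWord = [(s0.1, !s0.2), (w3.1, !w3.2)] := by
      rw [eA3', hrnil, List.append_nil, hA₃, hs]
      simp [invRev]
    have ezt : z1 = (s0.1, !s0.2) ∧ t0 = (w3.1, !w3.2) := by
      rw [EA1] at EA2
      simpa using EA2
    -- b.toWord two ways
    have EB1 : b.toWord = [(t0.1, !t0.2), w2] := by
      rw [eB1, hb₁, ht, hrnil]
      simp [invRev]
    have EB2 : b.toWord = [z4, s0] := by rw [eB2, hs]; rfl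
    have ebz : (t0.1, !t0.2) = z4 ∧ w2 = s0 := by
      rw [EB1] at EB2
      simpa using EB2
    have ht0 : t0 = ((true : Bool), (true : Bool)) := by
      rw [ezt.2, ← e3]; rfl
    have hz4' : z4 = ((false : Bool), (true : Bool)) := by
      have h1 : (false : Bool) = z4.1 := congrArg Prod.fst e4
      have h2 : (false : Bool) = !z4.2 := congrArg Prod.snd e4
      have h2' : z4.2 = true := by
        cases hv : z4.2
        · rw [hv] at h2; simp at h2
        · rfl
      exact Prod.ext h1.symm h2'
    have hfin := ebz.1
    rw [ht0, hz4'] at hfin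
    simp at hfin


/-- Build an automorphism of `F₂` from generator images and an explicit inverse. -/
def mkAut (f g : Bool → F₂) (hfg : ∀ x, FreeGroup.lift g (f x) = FreeGroup.of x)
    (hgf : ∀ x, FreeGroup.lift f (g x) = FreeGroup.of x) : F₂ ≃* F₂ :=
  MonoidHom.toMulEquiv (FreeGroup.lift f) (FreeGroup.lift g)
    (FreeGroup.ext_hom _ _ (fun a => by simp [hfg]))
    (FreeGroup.ext_hom _ _ (fun a => by simp [hgf]))

lemma mkAut_apply (f g : Bool → F₂) (hfg hgf) (z : F₂) :
    mkAut f g hfg hgf z = FreeGroup.lift f z := rfl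

lemma lift_X (f : Bool → F₂) : FreeGroup.lift f X = f true := FreeGroup.lift_apply_of
lemma lift_Y (f : Bool → F₂) : FreeGroup.lift f Y = f false := FreeGroup.lift_apply_of

lemma key : ∀ N, ∀ a b : F₂, a.toWord.length + b.toWord.length ≤ N →
    a * b * a⁻¹ * b⁻¹ = X * Y * X⁻¹ * Y⁻¹ →
    ∃ θ : F₂ ≃* F₂, θ X = a ∧ θ Y = b := by
  intro N
  induction N with
  | zero =>
    intro a b hl hc
    exfalso
    have ha : a = 1 := FreeGroup.toWord_eq_nil_iff.1 (List.length_eq_zero_iff.1 (by omega))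
    have hb : b = 1 := FreeGroup.toWord_eq_nil_iff.1 (List.length_eq_zero_iff.1 (by omega))
    rw [ha, hb] at hc
    have h0 : (1 : F₂) = X * Y * X⁻¹ * Y⁻¹ := by simpa using hc
    have := congrArg FreeGroup.toWord h0
    rw [cWord, FreeGroup.toWord_one] at this
    simp at this
  | succ N ih =>
    intro a b hl hc
    by_cases h1 : a.toWord.length ≤ (a * b).toWord.length
    · by_cases h5 : b.toWord.length ≤ (a * b).toWord.length
      · by_cases h3 : b.toWord.length ≤ (b * a).toWord.length
        · by_cases h6 : a.toWord.length ≤ (b * a).toWord.length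
          · by_cases h4 : b.toWord.length ≤ (b * a⁻¹).toWord.length
            · by_cases h2 : a.toWord.length ≤ (b * a⁻¹).toWord.length
              · obtain ⟨haX, hbY⟩ := main_lemma a b hc h1 h5 h3 h6 h4 h2
                exact ⟨MulEquiv.refl F₂, by simp [haX], by simp [hbY]⟩
              · -- |b * a⁻¹| < |a| : pair (a * b⁻¹, b)
                push_neg at h2
                have hlen : (a * b⁻¹).toWord.length = (b * a⁻¹).toWord.length := by
                  rw [show a * b⁻¹ = (b * a⁻¹)⁻¹ by group, FreeGroup.toWord_inv, invRev_length]
                obtain ⟨θ', hX', hY'⟩ := ih (a * b⁻¹) b (by omega)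
                  (by rw [← hc]; group)
                refine ⟨(mkAut (fun x => cond x (X * Y) Y) (fun x => cond x (X * Y⁻¹) Y)
                  (fun x => by cases x <;> simp [X, Y])
                  (fun x => by cases x <;> simp [X, Y])).trans θ', ?_, ?_⟩
                · rw [MulEquiv.trans_apply, mkAut_apply, lift_X]
                  simp only [cond_true, _root_.map_mul, hX', hY']
                  group
                · rw [MulEquiv.trans_apply, mkAut_apply, lift_Y]
                  simpa using hY'
            · -- |b * a⁻¹| < |b| : pair (a, b * a⁻¹)
              push_neg at h4
              obtain ⟨θ', hX', hY'⟩ := ih a (b * a⁻¹) (by omega)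
                (by rw [← hc]; group)
              refine ⟨(mkAut (fun x => cond x X (Y * X)) (fun x => cond x X (Y * X⁻¹))
                (fun x => by cases x <;> simp [X, Y])
                (fun x => by cases x <;> simp [X, Y])).trans θ', ?_, ?_⟩
              · rw [MulEquiv.trans_apply, mkAut_apply, lift_X]
                simpa using hX'
              · rw [MulEquiv.trans_apply, mkAut_apply, lift_Y]
                simp only [cond_false, _root_.map_mul, hX', hY']
                group
          · -- |b * a| < |a| : pair (b⁻¹, b * a)
            push_neg at h6
            have hlen : (b⁻¹).toWord.length = b.toWord.length := by
              rw [FreeGroup.toWord_inv, invRev_length]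
            obtain ⟨θ', hX', hY'⟩ := ih b⁻¹ (b * a) (by omega)
              (by rw [← hc]; group)
            refine ⟨(mkAut (fun x => cond x (X * Y) X⁻¹) (fun x => cond x Y⁻¹ (Y * X))
              (fun x => by cases x <;> simp [X, Y])
              (fun x => by cases x <;> simp [X, Y])).trans θ', ?_, ?_⟩
            · rw [MulEquiv.trans_apply, mkAut_apply, lift_X]
              simp only [cond_true, _root_.map_mul, hX', hY']
              group
            · rw [MulEquiv.trans_apply, mkAut_apply, lift_Y]
              simp only [cond_false, _root_.map_inv, hX']
              group
        · -- |b * a| < |b| : pair (a, b * a)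
          push_neg at h3
          obtain ⟨θ', hX', hY'⟩ := ih a (b * a) (by omega)
            (by rw [← hc]; group)
          refine ⟨(mkAut (fun x => cond x X (Y * X⁻¹)) (fun x => cond x X (Y * X))
            (fun x => by cases x <;> simp [X, Y])
            (fun x => by cases x <;> simp [X, Y])).trans θ', ?_, ?_⟩
          · rw [MulEquiv.trans_apply, mkAut_apply, lift_X]
            simpa using hX'
          · rw [MulEquiv.trans_apply, mkAut_apply, lift_Y]
            simp only [cond_false, _root_.map_mul, _root_.map_inv, hX', hY']
            group
      · -- |a * b| < |b| : pair (a * b, a⁻¹)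
        push_neg at h5
        have hlen : (a⁻¹).toWord.length = a.toWord.length := by
          rw [FreeGroup.toWord_inv, invRev_length]
        obtain ⟨θ', hX', hY'⟩ := ih (a * b) a⁻¹ (by omega)
          (by rw [← hc]; group)
        refine ⟨(mkAut (fun x => cond x Y⁻¹ (Y * X)) (fun x => cond x (X * Y) X⁻¹)
          (fun x => by cases x <;> simp [X, Y])
          (fun x => by cases x <;> simp [X, Y])).trans θ', ?_, ?_⟩
        · rw [MulEquiv.trans_apply, mkAut_apply, lift_X]
          simp only [cond_true, _root_.map_inv, hY']
          group
        · rw [MulEquiv.trans_apply, mkAut_apply, lift_Y]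
          simp only [cond_false, _root_.map_mul, hX', hY']
          group
    · -- |a * b| < |a| : pair (a * b, b)
      push_neg at h1
      obtain ⟨θ', hX', hY'⟩ := ih (a * b) b (by omega)
        (by rw [← hc]; group)
      refine ⟨(mkAut (fun x => cond x (X * Y⁻¹) Y) (fun x => cond x (X * Y) Y)
        (fun x => by cases x <;> simp [X, Y])
        (fun x => by cases x <;> simp [X, Y])).trans θ', ?_, ?_⟩
      · rw [MulEquiv.trans_apply, mkAut_apply, lift_X]
        simp only [cond_true, _root_.map_mul, _root_.map_inv, hX', hY']
        group
      · rw [MulEquiv.trans_apply, mkAut_apply, lift_Y]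
        simpa using hY'

end Aux

/-- The map `θ ↦ (θ(X), θ(Y))` is a bijection from the group of automorphisms of the
free group on `X, Y` fixing the commutator `(X,Y)` onto
`{(g₊, g₋) ∈ F₂² | (g₋, g₊) = (Y, X)}` (where `(a,b) = aba⁻¹b⁻¹`). -/
theorem stmt7 :
    Function.Injective toPair ∧
    Set.range toPair = {p : F₂ × F₂ | ⁅p.2, p.1⁆ = ⁅Y, X⁆} := by
  constructor
  · intro θ₁ θ₂ h
    have hX : θ₁.1 X = θ₂.1 X := congrArg Prod.fst h
    have hY : θ₁.1 Y = θ₂.1 Y := congrArg Prod.snd h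
    apply Subtype.ext
    apply MulEquiv.toMonoidHom_injective
    apply FreeGroup.ext_hom
    intro x
    cases x
    · simpa [Y] using hY
    · simpa [X] using hX
  · ext p
    simp only [Set.mem_range, Set.mem_setOf_eq]
    constructor
    · rintro ⟨⟨θ, hθ⟩, rfl⟩
      have hθ' : θ ⁅X, Y⁆ = ⁅X, Y⁆ := hθ
      show ⁅θ Y, θ X⁆ = ⁅Y, X⁆
      rw [← commutatorElement_inv (θ X) (θ Y), ← commutatorElement_inv X Y,
        ← map_commutatorElement, hθ']
    · intro hp
      have hc' : p.1 * p.2 * p.1⁻¹ * p.2⁻¹ = X * Y * X⁻¹ * Y⁻¹ := by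
        have h0 : ⁅p.1, p.2⁆ = ⁅X, Y⁆ := by
          rw [← commutatorElement_inv p.2 p.1, ← commutatorElement_inv Y X, hp]
        simpa [commutatorElement_def] using h0
      obtain ⟨θ, hX, hY⟩ := key (p.1.toWord.length + p.2.toWord.length) p.1 p.2 le_rfl hc'
      refine ⟨⟨θ, ?_⟩, ?_⟩
      · show θ ⁅X, Y⁆ = ⁅X, Y⁆
        rw [map_commutatorElement, hX, hY]
        simpa [commutatorElement_def] using hc'
      · show (θ X, θ Y) = p
        rw [hX, hY]

end Stmt7
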